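/- arXiv:0809.1411 — 7 statements merged into one kernel-verified Lean document; each statement's English description precedes it below -/
import Mathlib

section
/- Let A be an integral 2×2 matrix of determinant 1 whose entries, written as rows (−a,−b) and (c,d), satisfy 0 ≤ min(a,b,c,d) and max(b,c) < d. Then there exists a unique integer l ≥ 1 and a unique finite sequence (α₁,…,α_l) of integers with α_i ≥ 2 for all i such that A = M(α₁)M(α₂)⋯M(α_l). -/
/-- The matrix `M(α) = !![0, -1; 1, α]`. -/
def Mmat (a : ℤ) : Matrix (Fin 2) (Fin 2) ℤ := !![0, -1; 1, a]

lemma mmat_mul (α p q r s : ℤ) :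
    Mmat α * !![-p, -q; r, s] = !![-r, -s; α * r - p, α * s - q] := by
  ext i j
  fin_cases i <;> fin_cases j <;>
    simp [Mmat, Matrix.mul_apply, Fin.sum_univ_two] <;> ring

lemma good_prod : ∀ L : List ℤ, L ≠ [] → (∀ x ∈ L, 2 ≤ x) →
    ∃ p q r s : ℤ, (L.map Mmat).prod = !![-p, -q; r, s] ∧
      0 ≤ p ∧ p < q ∧ p < r ∧ 0 < r ∧ r < s ∧ q < s ∧ q - p ≤ s - r := by
  intro L
  induction L with
  | nil => intro h; exact absurd rfl h
  | cons α T ih =>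
    intro _ hall
    have hα : 2 ≤ α := hall α (by simp)
    rcases eq_or_ne T [] with rfl | hT
    · refine ⟨0, 1, 1, α, ?_, by norm_num, by norm_num, by norm_num, by norm_num,
        by omega, by omega, by omega⟩
      have h1 : (List.map Mmat [α]).prod = Mmat α := by simp
      rw [h1]
      ext i j; fin_cases i <;> fin_cases j <;> simp [Mmat]
    · obtain ⟨p, q, r, s, hP, h1, h2, h3, h4, h5, h6, h7⟩ :=
        ih hT (fun x hx => hall x (List.mem_cons_of_mem _ hx))
      refine ⟨r, s, α * r - p, α * s - q, ?_, by linarith, h5, by nlinarith, by nlinarith,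
        by nlinarith, by nlinarith, by nlinarith⟩
      rw [List.map_cons, List.prod_cons, hP, mmat_mul]

lemma ex_list : ∀ (n : ℕ) (a b c d : ℤ), d ≤ (n : ℤ) →
    b * c - a * d = 1 → 0 ≤ a → a < b → b < d →
    ∃ L : List ℤ, L ≠ [] ∧ (∀ x ∈ L, 2 ≤ x) ∧
      (L.map Mmat).prod = !![-a, -b; c, d] := by
  intro n
  induction n with
  | zero => intro a b c d hn hdet h0 hab hbd; exfalso; norm_num at hn; omega
  | succ n ih =>
    intro a b c d hn hdet h0 hab hbd
    rcases eq_or_lt_of_le h0 with ha | ha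
    · -- a = 0
      have ha' : a = 0 := ha.symm
      subst ha'
      have hbc : b * c = 1 := by linarith
      have hb1 : b = 1 := by
        have hdvd : b ∣ 1 := ⟨c, hbc.symm⟩
        have := Int.le_of_dvd one_pos hdvd
        omega
      have hc1 : c = 1 := by rw [hb1] at hbc; linarith
      refine ⟨[d], by simp, ?_, ?_⟩
      · intro x hx; simp at hx; omega
      · rw [hb1, hc1]
        have h1 : (List.map Mmat [d]).prod = Mmat d := by simp
        rw [h1]
        ext i j; fin_cases i <;> fin_cases j <;> simp [Mmat]
    · -- 1 ≤ a
      have hb2 : 2 ≤ b := by omega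
      have hb0 : (0:ℤ) < b := by omega
      set α : ℤ := d / b + 1 with hαdef
      have hede := Int.mul_ediv_add_emod d b
      have hmod1 : 0 ≤ d % b := Int.emod_nonneg d (by omega)
      have hmod2 : d % b < b := Int.emod_lt_of_pos d hb0
      have hmodne : d % b ≠ 0 := by
        intro h
        obtain ⟨k, hk⟩ := Int.dvd_of_emod_eq_zero h
        have hdvd1 : b ∣ 1 := ⟨c - a * k, by rw [hk] at hdet; linarith [hdet]; ⟩
        have := Int.le_of_dvd one_pos hdvd1
        omega
      set Q : ℤ := α * b - d with hQdef
      have hQeq : Q = b - d % b := by rw [hQdef, hαdef]; ring_nf; linarith [hede]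
      have hQ1 : 1 ≤ Q := by omega
      have hQb : Q < b := by omega
      set P : ℤ := α * a - c with hPdef
      have hkey : b * P = a * Q - 1 := by
        rw [hPdef, hQdef]; linear_combination (-1 : ℤ) * hdet
      have hP0 : 0 ≤ P := by nlinarith
      have hPQ : P < Q := by nlinarith
      have hbn : b ≤ (n : ℤ) := by push_cast at hn; omega
      have hdet' : Q * a - P * b = 1 := by linarith
      obtain ⟨L, hne, hall, hprod⟩ := ih P Q a b hbn hdet' hP0 hPQ hQb
      have hα2 : 2 ≤ α := by
        have h5 : 0 < b * (d / b) := by linarith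
        have h6 : 0 < d / b := by
          by_contra hc
          push_neg at hc
          have := mul_nonpos_of_nonneg_of_nonpos hb0.le hc
          linarith
        omega
      refine ⟨α :: L, by simp, ?_, ?_⟩
      · intro x hx
        rcases List.mem_cons.mp hx with rfl | hx
        · exact hα2
        · exact hall x hx
      · rw [List.map_cons, List.prod_cons, hprod, mmat_mul]
        have e1 : α * a - P = c := by rw [hPdef]; ring
        have e2 : α * b - Q = d := by rw [hQdef]; ring
        rw [e1, e2]

lemma uniq_list : ∀ L₁ L₂ : List ℤ, L₁ ≠ [] → L₂ ≠ [] →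
    (∀ x ∈ L₁, 2 ≤ x) → (∀ x ∈ L₂, 2 ≤ x) →
    (L₁.map Mmat).prod = (L₂.map Mmat).prod → L₁ = L₂ := by
  intro L₁
  induction L₁ with
  | nil => intro L₂ h; exact absurd rfl h
  | cons α T ih =>
    intro L₂ _ hne₂ hall₁ hall₂ hprod
    rcases L₂ with _ | ⟨α', T'⟩
    · exact absurd rfl hne₂
    have hα : 2 ≤ α := hall₁ α (by simp)
    have hα' : 2 ≤ α' := hall₂ α' (by simp)
    rcases eq_or_ne T [] with rfl | hT <;> rcases eq_or_ne T' [] with rfl | hT'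
    · -- both singletons
      simp only [List.map_cons, List.map_nil, List.prod_cons, List.prod_nil, mul_one] at hprod
      have h11 := congrFun (congrFun hprod 1) 1
      simp [Mmat] at h11
      rw [h11]
    · obtain ⟨p, q, r, s, hP, h1, h2, h3, h4, h5, h6, h7⟩ :=
        good_prod T' hT' (fun x hx => hall₂ x (List.mem_cons_of_mem _ hx))
      simp only [List.map_cons, List.map_nil, List.prod_cons, List.prod_nil, mul_one] at hprod
      rw [hP, mmat_mul] at hprod
      have h00 := congrFun (congrFun hprod 0) 0
      simp [Mmat] at h00
      omega
    · obtain ⟨p, q, r, s, hP, h1, h2, h3, h4, h5, h6, h7⟩ :=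
        good_prod T hT (fun x hx => hall₁ x (List.mem_cons_of_mem _ hx))
      simp only [List.map_cons, List.map_nil, List.prod_cons, List.prod_nil, mul_one] at hprod
      rw [hP, mmat_mul] at hprod
      have h00 := congrFun (congrFun hprod 0) 0
      simp [Mmat] at h00
      omega
    · obtain ⟨p, q, r, s, hP, h1, h2, h3, h4, h5, h6, h7⟩ :=
        good_prod T hT (fun x hx => hall₁ x (List.mem_cons_of_mem _ hx))
      obtain ⟨p', q', r', s', hP', h1', h2', h3', h4', h5', h6', h7'⟩ :=
        good_prod T' hT' (fun x hx => hall₂ x (List.mem_cons_of_mem _ hx))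
      simp only [List.map_cons, List.prod_cons] at hprod
      rw [hP, hP', mmat_mul, mmat_mul] at hprod
      have h00 := congrFun (congrFun hprod 0) 0
      have h01 := congrFun (congrFun hprod 0) 1
      have h10 := congrFun (congrFun hprod 1) 0
      have h11 := congrFun (congrFun hprod 1) 1
      simp at h00 h01 h10 h11
      have hr : r = r' := by omega
      have hs : s = s' := by omega
      subst hr; subst hs
      have hαα : α = α' := by
        rcases lt_trichotomy α α' with h | h | h
        · exfalso
          have hm := mul_le_mul_of_nonneg_right (by omega : α + 1 ≤ α') (by linarith : (0:ℤ) ≤ s)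
          nlinarith
        · exact h
        · exfalso
          have hm := mul_le_mul_of_nonneg_right (by omega : α' + 1 ≤ α) (by linarith : (0:ℤ) ≤ s)
          nlinarith
      subst hαα
      have hq : q = q' := by nlinarith
      have hp : p = p' := by nlinarith
      subst hq; subst hp
      have hTT : T = T' := by
        apply ih T' hT hT' (fun x hx => hall₁ x (List.mem_cons_of_mem _ hx))
          (fun x hx => hall₂ x (List.mem_cons_of_mem _ hx))
        rw [hP, hP']
      rw [hTT]

theorem stmt8 (a b c d : ℤ)
    (hdet : (!![-a, -b; c, d] : Matrix (Fin 2) (Fin 2) ℤ).det = 1)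
    (h0 : 0 ≤ min (min a b) (min c d)) (h1 : max b c < d) :
    ∃! L : List ℤ, L ≠ [] ∧ (∀ x ∈ L, 2 ≤ x) ∧ (L.map Mmat).prod = !![-a, -b; c, d] := by
  rw [Matrix.det_fin_two_of] at hdet
  have hdet' : b * c - a * d = 1 := by linarith
  simp only [le_min_iff] at h0
  obtain ⟨⟨ha0, hb0⟩, hc0, hd0⟩ := h0
  simp only [max_lt_iff] at h1
  obtain ⟨hbd, hcd⟩ := h1
  have hb1 : 1 ≤ b := by nlinarith
  have hab : a < b := by nlinarith
  obtain ⟨L, hne, hall, hprod⟩ :=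
    ex_list d.toNat a b c d (Int.self_le_toNat d) hdet' ha0 hab hbd
  refine ⟨L, ⟨hne, hall, hprod⟩, ?_⟩
  rintro L' ⟨hne', hall', hprod'⟩
  exact uniq_list L' L hne' hne hall' hall (hprod'.trans hprod.symm)
end

section
/- The matrices M(2), M(3), M(4), … generate a free submonoid of SL₂(ℤ): if α₁,…,α_l and β₁,…,β_m are integers all ≥ 2 with M(α₁)⋯M(α_l) = M(β₁)⋯M(β_m), then l = m and α_i = β_i for all i. -/
lemma Mmat_mul_right (Q : Matrix (Fin 2) (Fin 2) ℤ) (a : ℤ) :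
    (Q * Mmat a) 1 0 = Q 1 1 ∧ (Q * Mmat a) 1 1 = -Q 1 0 + a * Q 1 1 := by
  constructor <;>
    simp [Mmat, Matrix.mul_apply, Fin.sum_univ_two] <;> ring

lemma Mmat_inv (a : ℤ) : Mmat a * !![a, 1; -1, 0] = 1 := by
  ext i j
  fin_cases i <;> fin_cases j <;>
    simp [Mmat, Matrix.mul_apply, Fin.sum_univ_two, Matrix.one_apply]

lemma bot (L : List ℤ) (h : ∀ x ∈ L, 2 ≤ x) :
    0 ≤ (L.map Mmat).prod 1 0 ∧ (L.map Mmat).prod 1 0 < (L.map Mmat).prod 1 1 ∧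
      (L ≠ [] → 1 ≤ (L.map Mmat).prod 1 0) := by
  induction L using List.reverseRecOn with
  | nil => simp [Matrix.one_apply]
  | append_singleton K a ih =>
    have ha : 2 ≤ a := h a (by simp)
    obtain ⟨h0, h1, _⟩ := ih (fun x hx => h x (by simp [hx]))
    rw [List.map_append, List.prod_append, List.map_singleton, List.prod_singleton]
    obtain ⟨e0, e1⟩ := Mmat_mul_right ((K.map Mmat).prod) a
    rw [e0, e1]
    refine ⟨by omega, by nlinarith, fun _ => by omega⟩

/-- The monoid generated by `M(2), M(3), …` is free: equal products imply equal words. -/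
theorem stmt10 (L₁ L₂ : List ℤ) (h₁ : ∀ x ∈ L₁, 2 ≤ x) (h₂ : ∀ x ∈ L₂, 2 ≤ x)
    (h : (L₁.map Mmat).prod = (L₂.map Mmat).prod) : L₁ = L₂ := by
  induction L₁ using List.reverseRecOn generalizing L₂ with
  | nil =>
    rcases List.eq_nil_or_concat L₂ with rfl | ⟨K, b, rfl⟩
    · rfl
    · exfalso
      have hb := (bot _ h₂).2.2 (by simp)
      rw [← h] at hb
      simp [Matrix.one_apply] at hb
  | append_singleton K a ih =>
    have ha : 2 ≤ a := h₁ a (by simp)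
    have hK : ∀ x ∈ K, 2 ≤ x := fun x hx => h₁ x (by simp [hx])
    rcases List.eq_nil_or_concat L₂ with rfl | ⟨K', b, rfl⟩
    · exfalso
      have hb := (bot _ h₁).2.2 (by simp)
      rw [h] at hb
      simp [Matrix.one_apply] at hb
    · have hb : 2 ≤ b := h₂ b (by simp)
      have hK' : ∀ x ∈ K', 2 ≤ x := fun x hx => h₂ x (by simp [hx])
      set Q := (K.map Mmat).prod with hQ
      set R := (K'.map Mmat).prod with hR
      have hprod : Q * Mmat a = R * Mmat b := by
        simpa [List.map_append, List.prod_append] using h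
      obtain ⟨q0, q1, _⟩ := bot K hK
      obtain ⟨r0, r1, _⟩ := bot K' hK'
      simp only [← hQ] at q0 q1
      simp only [← hR] at r0 r1
      obtain ⟨eq0, eq1⟩ := Mmat_mul_right Q a
      obtain ⟨er0, er1⟩ := Mmat_mul_right R b
      have h10 : Q 1 1 = R 1 1 := by rw [← eq0, ← er0, hprod]
      have h11 : -Q 1 0 + a * Q 1 1 = -R 1 0 + b * R 1 1 := by
        rw [← eq1, ← er1, hprod]
      have hab : a = b := by
        rcases lt_trichotomy a b with h' | h' | h'
        · nlinarith [mul_le_mul_of_nonneg_right (show (1:ℤ) ≤ b - a by omega)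
            (show (0:ℤ) ≤ Q 1 1 by omega)]
        · exact h'
        · nlinarith [mul_le_mul_of_nonneg_right (show (1:ℤ) ≤ a - b by omega)
            (show (0:ℤ) ≤ Q 1 1 by omega)]
      subst hab
      have hQR : Q = R := by
        have := congrArg (· * !![a, 1; -1, 0]) hprod
        simpa [Matrix.mul_assoc, Mmat_inv] using this
      have hKK : K = K' := ih K' hK hK' (by rw [← hR, hQR])
      rw [hKK, List.concat_eq_append]
end

section
/- Let N ≥ 3 and let a ∈ {2,…,N−1} be invertible modulo N. Then W(a,N) is the sequence W((−N) mod a, a) followed by the single term 1 + ⌊N/a⌋, where (−N) mod a denotes the representative of −N modulo a lying in {1,…,a−1} (here gcd(a,N)=1 forces (−N) mod a to be invertible modulo a). -/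
/-- `IsW a N L` says that `L` is the word `W(a,N)`: a nonempty finite sequence of
integers `≥ 2` whose `M`-product is the matrix `!![-x, -y; a, N]` where
`y ∈ {1,…,N-1}` satisfies `a*y ≡ 1 (mod N)` and `x = (a*y-1)/N`. -/
def IsW (a N : ℤ) (L : List ℤ) : Prop :=
  L ≠ [] ∧ (∀ x ∈ L, 2 ≤ x) ∧
  ∃ y : ℤ, 1 ≤ y ∧ y ≤ N - 1 ∧ a * y ≡ 1 [ZMOD N] ∧
    (L.map Mmat).prod = !![-((a * y - 1) / N), -y; a, N]

theorem stmt13 (N a : ℤ) (hN : 3 ≤ N) (ha : 2 ≤ a) (ha' : a ≤ N - 1)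
    (hcop : IsCoprime a N) (L : List ℤ) (hL : IsW ((-N) % a) a L) :
    IsW a N (L ++ [1 + N / a]) := by
  obtain ⟨hne, hge, y', hy1, hy2, hmod, hprod⟩ := hL
  have ha0 : (0:ℤ) < a := by linarith
  have hN0 : (0:ℤ) < N := by linarith
  set b : ℤ := (-N) % a with hb
  set q : ℤ := N / a with hq
  set r : ℤ := N % a with hr
  have e1 : a * q + r = N := Int.mul_ediv_add_emod N a
  have hr0 : 0 ≤ r := Int.emod_nonneg N (by linarith)
  have hra : r < a := Int.emod_lt_of_pos N ha0
  have hrne : r ≠ 0 := by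
    intro h
    have hdvd : a ∣ N := Int.dvd_of_emod_eq_zero (by rw [hr] at h; exact h)
    have hu := hcop.isUnit_of_dvd' dvd_rfl hdvd
    rw [Int.isUnit_iff] at hu
    omega
  have e2 : b = a - r := by
    have h1 : (-N + a * (q + 1)) % a = (-N) % a := by
      exact Int.add_mul_emod_self_left (a := -N) (b := a) (c := q + 1)
    have h2 : -N + a * (q + 1) = a - r := by linarith
    rw [hb, ← h1, h2, Int.emod_eq_of_lt (by omega) (by omega)]
  set x' : ℤ := (b * y' - 1) / a with hx'
  have hdvd : a ∣ b * y' - 1 := by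
    have h := Int.ModEq.dvd hmod
    rw [show b * y' - 1 = -(1 - b * y') by ring]
    exact dvd_neg.mpr h
  have e3 : a * x' = b * y' - 1 := Int.mul_ediv_cancel' hdvd
  set y : ℤ := y' * (1 + q) - x' with hy
  have e4 : a * y = N * y' + 1 := by
    rw [hy]; nlinarith [e1, e2, e3]
  have hq1 : 1 ≤ q := by
    rw [hq]
    rw [Int.le_ediv_iff_mul_le ha0]
    linarith
  have e5 : (a * y - 1) / N = y' := by
    rw [show a * y - 1 = N * y' by linarith]
    exact Int.mul_ediv_cancel_left _ (by linarith)
  refine ⟨by simp, ?_, y, ?_, ?_, ?_, ?_⟩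
  · intro x hx
    rcases List.mem_append.mp hx with h | h
    · exact hge x h
    · simp at h; omega
  · nlinarith [e4]
  · nlinarith [e4]
  · exact Int.modEq_iff_dvd.mpr ⟨-y', by linarith⟩
  · rw [List.map_append, List.prod_append, List.map_singleton, List.prod_singleton,
      hprod, e5]
    ext i j
    fin_cases i <;> fin_cases j <;>
      simp [Mmat, Matrix.mul_apply, Fin.sum_univ_two] <;> linarith
end

section
/- Let N ≥ 3, let a ∈ {2,…,N−1} be invertible modulo N, and let b ∈ {1,…,N−1} satisfy ab ≡ 1 (mod N). Then W(a,N) is the single term 1 + ⌊N/b⌋ followed by the sequence W(c, b), where c ∈ {1,…,b−1} is the inverse of (−N) modulo b. -/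
theorem stmt14 (N a b : ℤ) (hN : 3 ≤ N) (ha : 2 ≤ a) (ha' : a ≤ N - 1)
    (hb : 1 ≤ b) (hb' : b ≤ N - 1) (hab : a * b ≡ 1 [ZMOD N])
    (c : ℤ) (hc : 1 ≤ c) (hc' : c ≤ b - 1) (hcinv : (-N) * c ≡ 1 [ZMOD b])
    (L : List ℤ) (hL : IsW c b L) :
    IsW a N ((1 + N / b) :: L) := by
  obtain ⟨hne, h2, y', hy'1, hy'2, hy'c, hprod⟩ := hL
  have hb2 : 2 ≤ b := by linarith
  have hbpos : (0 : ℤ) < b := by linarith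
  have hNpos : (0 : ℤ) < N := by linarith
  have hdvd1 : b ∣ N * c + 1 := by
    have h := hcinv.dvd
    have he : N * c + 1 = 1 - (-N) * c := by ring
    rw [he]; exact h
  have hdvd2 : b ∣ c * y' - 1 := hy'c.symm.dvd
  have hdvd3 : N ∣ a * b - 1 := hab.symm.dvd
  obtain ⟨k, hk⟩ := hdvd3
  have hk1 : 1 ≤ k := by nlinarith
  have hk2 : k ≤ b - 1 := by nlinarith
  have hkc : k = c := by
    have h1 : b ∣ N * k + 1 := by
      have he : N * k + 1 = a * b := by linarith
      rw [he]; exact dvd_mul_left b a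
    have h2' : b ∣ N * (k - c) := by
      have he : N * (k - c) = (N * k + 1) - (N * c + 1) := by ring
      rw [he]; exact dvd_sub h1 hdvd1
    obtain ⟨m, hm⟩ := hdvd1
    have hcop : IsCoprime b N := ⟨m, -c, by linear_combination -hm⟩
    have h3 : b ∣ k - c := hcop.dvd_of_dvd_mul_left h2'
    have h4 : k - c = 0 := Int.eq_zero_of_abs_lt_dvd h3 (by rw [abs_lt]; omega)
    omega
  have habk : a * b = c * N + 1 := by rw [← hkc]; linarith
  -- y' = b - N % b
  have hmod : N % b + b * (N / b) = N := Int.emod_add_mul_ediv N b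
  have hmodnn : 0 ≤ N % b := Int.emod_nonneg N hbpos.ne'
  have hmodlt : N % b < b := Int.emod_lt_of_pos N hbpos
  have hmodpos : 1 ≤ N % b := by
    by_contra h
    have h0 : N % b = 0 := by omega
    have hbN : b ∣ N := Int.dvd_of_emod_eq_zero h0
    have hb1 : b ∣ 1 := by
      have he : (1 : ℤ) = (N * c + 1) - N * c := by ring
      rw [he]; exact dvd_sub hdvd1 (hbN.mul_right c)
    have := Int.le_of_dvd one_pos hb1
    omega
  have hy'eq : y' = b - N % b := by
    have h1 : b ∣ y' + N := by
      have he : y' + N = (-N) * (c * y' - 1) - y' * (-(N * c + 1)) := by ring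
      rw [he]
      exact dvd_sub (hdvd2.mul_left (-N)) ((dvd_neg.mpr hdvd1).mul_left y')
    have h2' : b ∣ (b - N % b) + N := by
      have he : (b - N % b) + N = b * (1 + N / b) := by linear_combination -hmod
      rw [he]; exact Dvd.intro _ rfl
    have h3 : b ∣ y' - (b - N % b) := by
      have he : y' - (b - N % b) = (y' + N) - ((b - N % b) + N) := by ring
      rw [he]; exact dvd_sub h1 h2'
    have h4 : y' - (b - N % b) = 0 := Int.eq_zero_of_abs_lt_dvd h3 (by rw [abs_lt]; omega)
    omega
  have hdiv : (a * b - 1) / N = c := by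
    have he : a * b - 1 = c * N := by linarith
    rw [he, Int.mul_ediv_cancel _ hNpos.ne']
  have hx' : ((c * y' - 1) / b) * b = c * y' - 1 := Int.ediv_mul_cancel hdvd2
  have hub : (1 + N / b) * b - y' = N := by
    rw [hy'eq]; linear_combination hmod
  have hua : (1 + N / b) * c - (c * y' - 1) / b = a := by
    have heq : ((1 + N / b) * c - (c * y' - 1) / b) * b = a * b := by
      linear_combination -hx' + c * hub - habk
    exact mul_right_cancel₀ hbpos.ne' heq
  refine ⟨by simp, ?_, b, hb, hb', hab, ?_⟩
  · intro x hx
    rw [List.mem_cons] at hx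
    rcases hx with rfl | h
    · have : 1 ≤ N / b := by
        rw [Int.le_ediv_iff_mul_le hbpos]; linarith
      linarith
    · exact h2 x h
  rw [List.map_cons, List.prod_cons, hprod, hdiv]
  ext i j
  fin_cases i <;> fin_cases j <;>
    simp [Mmat, Matrix.mul_apply, Fin.sum_univ_two] <;> linarith [hua, hub]
end

section
/- Let N ≥ 2 and let a, b ∈ {1,…,N−1} satisfy ab ≡ 1 (mod N). Then W(a,N) and W(b,N) have the same length l, and W(a,N)_i = W(b,N)_{l+1−i} for i = 1,…,l; that is, W(b,N) is the reversal of W(a,N). -/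
open Matrix

/-- The diagonal matrix `diag(1, -1)`. -/
def Dmat : Matrix (Fin 2) (Fin 2) ℤ := !![1, 0; 0, -1]

lemma D_sq : Dmat * Dmat = 1 := by
  ext i j
  fin_cases i <;> fin_cases j <;>
    simp [Dmat, Matrix.mul_apply, Fin.sum_univ_two, Matrix.one_apply]

lemma tft (a b c d : ℤ) : (!![a,b;c,d])ᵀ = !![a,c;b,d] := by
  ext i j; fin_cases i <;> fin_cases j <;> simp

lemma D_M_D (α : ℤ) : Dmat * (Mmat α)ᵀ * Dmat = Mmat α := by
  rw [Mmat, tft]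
  ext i j
  fin_cases i <;> fin_cases j <;>
    simp [Dmat, Mmat, Matrix.mul_apply, Fin.sum_univ_two]

lemma D_conj_mul (P Q : Matrix (Fin 2) (Fin 2) ℤ) :
    Dmat * (Q * P)ᵀ * Dmat = (Dmat * Pᵀ * Dmat) * (Dmat * Qᵀ * Dmat) := by
  simp only [Matrix.transpose_mul, Matrix.mul_assoc]
  congr 1
  congr 1
  rw [← Matrix.mul_assoc Dmat Dmat, D_sq, Matrix.one_mul]

lemma rev_prod (L : List ℤ) :
    (L.reverse.map Mmat).prod = Dmat * ((L.map Mmat).prod)ᵀ * Dmat := by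
  induction L with
  | nil => simp [D_sq]
  | cons a l ih =>
      rw [List.reverse_cons, List.map_append, List.prod_append, ih, List.map_singleton,
        List.prod_singleton, List.map_cons, List.prod_cons,
        D_conj_mul ((l.map Mmat).prod) (Mmat a), D_M_D]

lemma mul_M_one_zero (P : Matrix (Fin 2) (Fin 2) ℤ) (α : ℤ) :
    (P * Mmat α) 1 0 = P 1 1 := by
  simp [Mmat, Matrix.mul_apply, Fin.sum_univ_two]

lemma mul_M_one_one (P : Matrix (Fin 2) (Fin 2) ℤ) (α : ℤ) :
    (P * Mmat α) 1 1 = P 1 1 * α - P 1 0 := by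
  simp [Mmat, Matrix.mul_apply, Fin.sum_univ_two]; ring

lemma bottom : ∀ (L : List ℤ), (∀ x ∈ L, 2 ≤ x) →
    0 ≤ (L.map Mmat).prod 1 0 ∧ (L.map Mmat).prod 1 0 < (L.map Mmat).prod 1 1 ∧
      (L ≠ [] → 1 ≤ (L.map Mmat).prod 1 0) := by
  intro L
  induction L using List.reverseRecOn with
  | nil =>
      intro _
      simp [Matrix.one_apply]
  | append_singleton l α ih =>
      intro h2
      have hα : 2 ≤ α := h2 α (by simp)
      obtain ⟨h0, h1, h3⟩ := ih (fun x hx => h2 x (by simp [hx]))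
      rw [List.map_append, List.prod_append, List.map_singleton, List.prod_singleton,
        mul_M_one_zero, mul_M_one_one]
      rcases eq_or_ne l [] with rfl | hne
      · simp only [List.map_nil, List.prod_nil, Matrix.one_apply]
        norm_num
        omega
      · have h3' := h3 hne
        have key : 2 * (l.map Mmat).prod 1 1 ≤ (l.map Mmat).prod 1 1 * α := by
          nlinarith
        refine ⟨by linarith, by linarith, fun _ => by linarith⟩

def MmatInv (α : ℤ) : Matrix (Fin 2) (Fin 2) ℤ := !![α, 1; -1, 0]

lemma M_Minv (α : ℤ) : Mmat α * MmatInv α = 1 := by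
  ext i j
  fin_cases i <;> fin_cases j <;>
    simp [Mmat, MmatInv, Matrix.mul_apply, Fin.sum_univ_two, Matrix.one_apply]

lemma uniq : ∀ (n : ℕ) (L1 L2 : List ℤ), L1.length ≤ n → L1 ≠ [] → L2 ≠ [] →
    (∀ x ∈ L1, 2 ≤ x) → (∀ x ∈ L2, 2 ≤ x) →
    (L1.map Mmat).prod = (L2.map Mmat).prod → L1 = L2 := by
  intro n
  induction n with
  | zero =>
      intro L1 L2 hlen h1 _ _ _ _
      rcases L1 with _ | ⟨x, l⟩
      · exact absurd rfl h1
      · simp at hlen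
  | succ n ih =>
      intro L1 L2 hlen h1 h2 g1 g2 hP
      obtain ⟨K1, α, rfl⟩ := L1.eq_nil_or_concat.resolve_left h1
      obtain ⟨K2, β, rfl⟩ := L2.eq_nil_or_concat.resolve_left h2
      rw [List.concat_eq_append] at hlen g1 hP ⊢
      rw [List.concat_eq_append] at g2 hP ⊢
      have hα : 2 ≤ α := g1 α (by simp)
      have hβ : 2 ≤ β := g2 β (by simp)
      have g1' : ∀ x ∈ K1, 2 ≤ x := fun x hx => g1 x (by simp [hx])
      have g2' : ∀ x ∈ K2, 2 ≤ x := fun x hx => g2 x (by simp [hx])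
      rw [List.map_append, List.prod_append, List.map_singleton, List.prod_singleton,
        List.map_append, List.prod_append, List.map_singleton, List.prod_singleton] at hP
      obtain ⟨b10, b11, b1pos⟩ := bottom K1 g1'
      obtain ⟨b20, b21, b2pos⟩ := bottom K2 g2'
      have e10 : (K1.map Mmat).prod 1 1 = (K2.map Mmat).prod 1 1 := by
        have := congrFun (congrFun hP 1) 0
        rwa [mul_M_one_zero, mul_M_one_zero] at this
      have e11 : (K1.map Mmat).prod 1 1 * α - (K1.map Mmat).prod 1 0
          = (K2.map Mmat).prod 1 1 * β - (K2.map Mmat).prod 1 0 := by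
        have := congrFun (congrFun hP 1) 1
        rwa [mul_M_one_one, mul_M_one_one] at this
      have hαβ : α = β := by
        by_contra h
        rcases lt_or_gt_of_ne h with h' | h'
        · nlinarith [e10, e11, b10, b11, b20, b21]
        · nlinarith [e10, e11, b10, b11, b20, b21]
      have hPPα : (K1.map Mmat).prod * Mmat α = (K2.map Mmat).prod * Mmat α := by
        rw [hαβ] at hP ⊢; exact hP
      have hQ : (K1.map Mmat).prod = (K2.map Mmat).prod := by
        calc (K1.map Mmat).prod
            = (K1.map Mmat).prod * (Mmat α * MmatInv α) := by rw [M_Minv, Matrix.mul_one]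
          _ = ((K1.map Mmat).prod * Mmat α) * MmatInv α := by rw [Matrix.mul_assoc]
          _ = ((K2.map Mmat).prod * Mmat α) * MmatInv α := by rw [hPPα]
          _ = (K2.map Mmat).prod * (Mmat α * MmatInv α) := by rw [Matrix.mul_assoc]
          _ = (K2.map Mmat).prod := by rw [M_Minv, Matrix.mul_one]
      rcases eq_or_ne K1 [] with rfl | hK1
      · rcases eq_or_ne K2 [] with rfl | hK2
        · rw [hαβ]
        · exfalso
          have h1' := b2pos hK2
          rw [← hQ] at h1'
          simp [Matrix.one_apply] at h1'
      · have hK2 : K2 ≠ [] := by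
          intro hc
          have h1' := b1pos hK1
          rw [hQ, hc] at h1'
          simp [Matrix.one_apply] at h1'
        have hlen' : K1.length ≤ n := by
          simp at hlen; omega
        rw [ih K1 K2 hlen' hK1 hK2 g1' g2' hQ, hαβ]

theorem stmt15 (N a b : ℤ) (hN : 2 ≤ N) (ha : 1 ≤ a) (ha' : a ≤ N - 1)
    (hb : 1 ≤ b) (hb' : b ≤ N - 1) (hab : a * b ≡ 1 [ZMOD N])
    (L L' : List ℤ) (hL : IsW a N L) (hL' : IsW b N L') :
    L' = L.reverse := by
  obtain ⟨hne, h2, y, hy1, hy2, hymod, hprod⟩ := hL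
  obtain ⟨hne', h2', z, hz1, hz2, hzmod, hprod'⟩ := hL'
  -- y = b
  have hyb : y = b := by
    have h1 : y * (a * b) ≡ y * 1 [ZMOD N] := hab.mul_left y
    have h3 : y ≡ y * (a * b) [ZMOD N] := by simpa using h1.symm
    have h5 : b * (a * y) ≡ b [ZMOD N] := by simpa using hymod.mul_left b
    have h4 : y * (a * b) = b * (a * y) := by ring
    have h6 : y ≡ b [ZMOD N] := h3.trans (h4 ▸ h5)
    have hd := h6.dvd
    have := Int.eq_zero_of_abs_lt_dvd hd (abs_lt.mpr ⟨by linarith, by linarith⟩)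
    linarith
  -- z = a
  have hza : z = a := by
    have h1 : z * (b * a) ≡ z * 1 [ZMOD N] := ((mul_comm a b ▸ hab).mul_left z)
    have h3 : z ≡ z * (b * a) [ZMOD N] := by simpa using h1.symm
    have h5 : a * (b * z) ≡ a [ZMOD N] := by simpa using hzmod.mul_left a
    have h4 : z * (b * a) = a * (b * z) := by ring
    have h6 : z ≡ a [ZMOD N] := h3.trans (h4 ▸ h5)
    have hd := h6.dvd
    have := Int.eq_zero_of_abs_lt_dvd hd (abs_lt.mpr ⟨by linarith, by linarith⟩)
    linarith
  rw [hyb] at hprod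
  rw [hza] at hprod'
  have hrev : (L.reverse.map Mmat).prod = !![-((b * a - 1) / N), -a; b, N] := by
    rw [rev_prod, hprod, tft]
    ext i j
    fin_cases i <;> fin_cases j <;>
      simp [Dmat, Matrix.mul_apply, Fin.sum_univ_two, mul_comm a b]
  have hEq : (L'.map Mmat).prod = (L.reverse.map Mmat).prod := by
    rw [hprod', hrev]
  have hrne : L.reverse ≠ [] := by
    intro h
    exact hne (List.reverse_eq_nil_iff.mp h)
  have h2r : ∀ x ∈ L.reverse, 2 ≤ x := fun x hx => h2 x (List.mem_reverse.mp hx)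
  exact uniq L'.length L' L.reverse le_rfl hne' hrne h2' h2r hEq
end

section
/- Let N ≥ 4 and let a ∈ {2,…,N−2} be invertible modulo N, and set λ = ⌊a/(N−a)⌋. Then W(a,N) equals the sequence W((λ+1)a − λN, λa − (λ−1)N) followed by the constant sequence 2,2,…,2 of length λ. -/
lemma rep_prod (k : ℕ) :
    ((List.replicate k (2:ℤ)).map Mmat).prod = !![1 - (k:ℤ), -(k:ℤ); (k:ℤ), (k:ℤ)+1] := by
  induction k with
  | zero => ext i j; fin_cases i <;> fin_cases j <;> simp
  | succ k ih =>
    rw [List.replicate_succ, List.map_cons, List.prod_cons, ih]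
    ext i j
    fin_cases i <;> fin_cases j <;>
      simp [Mmat, Matrix.mul_apply, Fin.sum_univ_two] <;> push_cast <;> ring

theorem stmt17 (N a lam : ℤ) (hN : 4 ≤ N) (ha : 2 ≤ a) (ha' : a ≤ N - 2)
    (hcop : IsCoprime a N) (hlam : lam = a / (N - a))
    (L : List ℤ) (hL : IsW ((lam + 1) * a - lam * N) (lam * a - (lam - 1) * N) L) :
    IsW a N (L ++ List.replicate lam.toNat 2) := by
  obtain ⟨hne, h2, y', hy1, hy2, hcong, hprod⟩ := hL
  have hNa : 2 ≤ N - a := by linarith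
  have hlam0 : 0 ≤ lam := hlam ▸ Int.ediv_nonneg (by linarith) (by linarith)
  set A := (lam + 1) * a - lam * N with hA
  set B := lam * a - (lam - 1) * N with hB
  have hAmod : A = a % (N - a) := by rw [hA, hlam, Int.emod_def]; ring
  have hA0 : 0 ≤ A := hAmod ▸ Int.emod_nonneg a (by linarith)
  have hAlt : A < N - a := hAmod ▸ Int.emod_lt_of_pos a (by linarith)
  have hBA : B - A = N - a := by rw [hA, hB]; ring
  have hB2 : 2 ≤ B := by linarith
  have hdvd : B ∣ A * y' - 1 := hcong.symm.dvd
  obtain ⟨x', hx'⟩ := hdvd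
  have hdiv : (A * y' - 1) / B = x' := by
    rw [hx', Int.mul_ediv_cancel_left _ (by linarith : B ≠ 0)]
  have hAy : 0 ≤ A * y' := mul_nonneg hA0 (by linarith)
  have hx0 : 0 ≤ x' := by nlinarith
  have hxy : x' < y' := by nlinarith [mul_le_mul_of_nonneg_right (by linarith : A ≤ B - 2) (by linarith : (0:ℤ) ≤ y')]
  have hyx : y' - x' ≤ B - A := by nlinarith [mul_le_mul_of_nonneg_left (by linarith : y' ≤ B - 1) (by linarith : (0:ℤ) ≤ B - A)]
  set y : ℤ := (lam + 1) * y' - lam * x' with hy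
  set x : ℤ := lam * y' - (lam - 1) * x' with hx
  have hdet : a * y - N * x = 1 := by
    have : a * y - N * x = A * y' - B * x' := by rw [hA, hB, hy, hx]; ring
    rw [this]; linarith
  refine ⟨by simp [hne], ?_, y, ?_, ?_, ?_, ?_⟩
  · intro z hz
    rcases List.mem_append.mp hz with h | h
    · exact h2 z h
    · rw [List.eq_of_mem_replicate h]
  · have := mul_nonneg hlam0 (by linarith : (0:ℤ) ≤ y' - x' - 1)
    rw [hy]; nlinarith
  · have h1 : 0 ≤ lam * ((B - A) - (y' - x')) := mul_nonneg hlam0 (by linarith)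
    have h2' : N - 1 = (B - 1) + lam * (B - A) := by rw [hBA]; rw [hB]; ring
    rw [hy]; nlinarith
  · have : N ∣ 1 - a * y := ⟨-x, by linarith⟩
    exact (Int.modEq_iff_dvd.mpr this)
  · rw [List.map_append, List.prod_append, hprod, rep_prod,
      Int.toNat_of_nonneg hlam0, hdiv]
    have hxdiv : (a * y - 1) / N = x := by
      rw [show a * y - 1 = N * x by linarith,
        Int.mul_ediv_cancel_left _ (by linarith : N ≠ 0)]
    rw [hxdiv]
    ext i j
    fin_cases i <;> fin_cases j <;>
      simp [Matrix.mul_apply, Fin.sum_univ_two]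
    · rw [hx]; ring
    · rw [hy]; ring
    · linear_combination (1 - lam) * hA + lam * hB
    · linear_combination (-lam) * hA + (lam + 1) * hB
end

section
/- Let N ≥ 2 and let a ∈ {1,…,N−1} be invertible modulo N (so that N−a is also invertible modulo N). Then σ(a,N) = σ(N−a,N). -/
lemma inv_lemma : ∀ (L : List ℤ), L ≠ [] → (∀ x ∈ L, 2 ≤ x) →
    ∃ x y r s : ℤ, (L.map Mmat).prod = !![-x, -y; r, s] ∧ 0 ≤ x ∧ x < y ∧ 1 ≤ r ∧ r < s ∧
      1 ≤ r - x ∧ r - x ≤ s - y ∧ (r = 1 → L = [s]) := by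
  intro L
  induction L using List.reverseRecOn with
  | nil => intro h; exact absurd rfl h
  | append_singleton T α ih =>
    intro _ h2
    have hα : 2 ≤ α := h2 α (by simp)
    rcases eq_or_ne T [] with rfl | hT
    · refine ⟨0, 1, 1, α, ?_, by norm_num, by norm_num, le_refl _, by linarith, by norm_num,
        by linarith, fun _ => by simp⟩
      simp [Mmat]
    · obtain ⟨x, y, r, s, hprod, hx, hxy, hr, hrs, hrx, hsy, _⟩ :=
        ih hT (fun z hz => h2 z (by simp [hz]))
      refine ⟨y, α*y - x, s, α*s - r, ?_, by linarith, by nlinarith, by linarith, by nlinarith,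
        by linarith, by nlinarith, fun hs1 => absurd hs1 (by linarith)⟩
      rw [List.map_append, List.prod_append, hprod]
      simp [Mmat, Matrix.mul_fin_two]
      ring_nf
      exact ⟨trivial, trivial⟩

lemma prod_concat (T : List ℤ) (α : ℤ) :
    ((T ++ [α]).map Mmat).prod = (T.map Mmat).prod * Mmat α := by simp

lemma decLast (a N : ℤ) (ha : 1 ≤ a) (h2a : 2*a < N) (L : List ℤ) (h : IsW a N L) :
    ∃ ω α, L = ω ++ [α] ∧ 3 ≤ α ∧ IsW a (N-a) (ω ++ [α-1]) ∧
      ((ω ++ [α-1]).map (fun x => x - 1)).sum + 1 = (L.map (fun x => x - 1)).sum := by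
  obtain ⟨hne, h2, y, hy1, hy2, hmod, hprod⟩ := h
  obtain ⟨ω, α, hLa⟩ := (List.eq_nil_or_concat L).resolve_left hne
  rw [List.concat_eq_append] at hLa
  subst hLa
  have hα : 2 ≤ α := h2 α (by simp)
  have hyd : a * y - 1 = N * ((a*y-1)/N) := by
    have hd : N ∣ 1 - a * y := Int.ModEq.dvd hmod
    obtain ⟨k, hk⟩ := hd
    rw [show a*y-1 = N * (-k) by linarith]
    rw [Int.mul_ediv_cancel_left _ (by linarith : N ≠ 0)]
  rcases eq_or_ne ω [] with rfl | hω
  · -- L = [α]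
    rw [prod_concat, List.map_nil, List.prod_nil, one_mul] at hprod
    rw [← Matrix.ext_iff] at hprod
    simp [Fin.forall_fin_two, Mmat] at hprod
    obtain ⟨⟨h00, h01⟩, h10, h11⟩ := hprod
    have ha1 : a = 1 := h10.symm
    subst ha1
    have hN3 : 3 ≤ N := by omega
    refine ⟨[], α, rfl, by omega, ⟨by simp, ?_, 1, le_refl _, by omega, ?_, ?_⟩, by simp⟩
    · intro z hz
      simp at hz
      omega
    · simpa using Int.ModEq.refl 1
    · have h0 : ((1:ℤ) * 1 - 1) / (N - 1) = 0 := by norm_num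
      rw [h0, ← h11]
      simp [Mmat]
  · obtain ⟨x0, y0, r0, s0, hprodω, hx0, hxy0, hr0, hrs0, hrx0, hsy0, _⟩ :=
      inv_lemma ω hω (fun z hz => h2 z (by simp [hz]))
    rw [prod_concat, hprodω] at hprod
    rw [← Matrix.ext_iff] at hprod
    simp [Fin.forall_fin_two, Mmat, Matrix.mul_fin_two] at hprod
    obtain ⟨⟨h00, h01⟩, h10, h11⟩ := hprod
    have hay : a * y - 1 = N * y0 := by rw [hyd, ← h00]
    have hα3 : 3 ≤ α := by nlinarith [mul_le_mul_of_nonneg_left (by linarith : (2:ℤ) ≤ α) (by linarith : (0:ℤ) ≤ s0)]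
    have hNa0 : N - a ≠ 0 := by omega
    have hkey : a * (y - y0) - 1 = (N - a) * y0 := by nlinarith
    have hdiv : (a * (y - y0) - 1) / (N - a) = y0 := by
      rw [hkey, Int.mul_ediv_cancel_left _ hNa0]
    have h2' : ∀ z ∈ ω ++ [α - 1], 2 ≤ z := by
      intro z hz
      rcases List.mem_append.mp hz with h | h
      · exact h2 z (by simp [h])
      · simp at h; omega
    obtain ⟨x', y', r', s', hprod', hx', hxy', hr', hrs', hrx', hsy', _⟩ :=
      inv_lemma (ω ++ [α - 1]) (by simp) h2'
    have hmatch := hprod'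
    rw [prod_concat, hprodω, ← Matrix.ext_iff] at hmatch
    simp [Fin.forall_fin_two, Mmat, Matrix.mul_fin_two] at hmatch
    obtain ⟨⟨m00, m01⟩, m10, m11⟩ := hmatch
    have hy2 : y' = y - y0 := by linarith
    have hs' : s' = N - a := by linarith
    refine ⟨ω, α, rfl, hα3, ⟨by simp, h2', y - y0, by omega, by omega, ?_, ?_⟩, ?_⟩
    · rw [Int.modEq_iff_dvd]
      exact ⟨-y0, by linarith⟩
    · rw [hdiv, hprod', hy2, hs', ← Matrix.ext_iff]
      simp [Fin.forall_fin_two]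
      omega
    · simp
      ring

lemma appendTwo (a N : ℤ) (ha : 1 ≤ a) (h2a : 2*a < N) (L : List ℤ) (h : IsW (N-a) N L) :
    ∃ T, L = T ++ [2] ∧ IsW (N - 2*a) (N - a) T ∧
      (T.map (fun x => x - 1)).sum + 1 = (L.map (fun x => x - 1)).sum := by
  obtain ⟨hne, h2, y, hy1, hy2, hmod, hprod⟩ := h
  obtain ⟨ω, α, hLa⟩ := (List.eq_nil_or_concat L).resolve_left hne
  rw [List.concat_eq_append] at hLa
  subst hLa
  have hα : 2 ≤ α := h2 α (by simp)
  have hyd : (N-a) * y - 1 = N * (((N-a)*y-1)/N) := by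
    have hd : N ∣ 1 - (N-a) * y := Int.ModEq.dvd hmod
    obtain ⟨k, hk⟩ := hd
    rw [show (N-a)*y-1 = N * (-k) by linarith]
    rw [Int.mul_ediv_cancel_left _ (by linarith : N ≠ 0)]
  rcases eq_or_ne ω [] with rfl | hω
  · rw [prod_concat, List.map_nil, List.prod_nil, one_mul] at hprod
    rw [← Matrix.ext_iff] at hprod
    simp [Fin.forall_fin_two, Mmat] at hprod
    obtain ⟨⟨h00, h01⟩, h10, h11⟩ := hprod
    omega
  · obtain ⟨x0, y0, r0, s0, hprodω, hx0, hxy0, hr0, hrs0, hrx0, hsy0, _⟩ :=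
      inv_lemma ω hω (fun z hz => h2 z (by simp [hz]))
    rw [prod_concat, hprodω] at hprod
    rw [← Matrix.ext_iff] at hprod
    simp [Fin.forall_fin_two, Mmat, Matrix.mul_fin_two] at hprod
    obtain ⟨⟨h00, h01⟩, h10, h11⟩ := hprod
    have hay : (N-a) * y - 1 = N * y0 := by rw [hyd, ← h00]
    have hα2 : α = 2 := by
      have h3 : ¬ (3 ≤ α) := by
        intro h3
        nlinarith [mul_le_mul_of_nonneg_right h3 (show (0:ℤ) ≤ s0 by linarith)]
      omega
    subst hα2
    have hy : y = 2*y0 - x0 := by linarith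
    have hr0v : r0 = N - 2*a := by linarith
    have hs0v : s0 = N - a := by linarith
    have hNa0 : N - a ≠ 0 := by omega
    have hkey : (N - 2*a)*y0 - 1 = (N-a)*x0 := by linear_combination hay - (N-a)*hy
    have hdiv : ((N - 2*a)*y0 - 1)/(N-a) = x0 := by
      rw [hkey, Int.mul_ediv_cancel_left _ hNa0]
    refine ⟨ω, rfl, ⟨hω, fun z hz => h2 z (by simp [hz]), y0, by omega, by omega, ?_, ?_⟩, ?_⟩
    · rw [Int.modEq_iff_dvd]
      exact ⟨-x0, by linarith⟩
    · rw [hdiv, hprodω, hr0v, hs0v]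
    · simp

lemma base2 (a L) (h : IsW a 2 L) (ha : a = 1) : L = [2] := by
  subst ha
  obtain ⟨hne, h2, y, hy1, hy2, hmod, hprod⟩ := h
  obtain ⟨x', y', r', s', hprod', hx', hxy', hr', hrs', hrx', hsy', hsing⟩ :=
    inv_lemma L hne h2
  rw [hprod'] at hprod
  rw [← Matrix.ext_iff] at hprod
  simp [Fin.forall_fin_two] at hprod
  obtain ⟨⟨h00, h01⟩, h10, h11⟩ := hprod
  rw [hsing (by omega), h11]

lemma main_ind : ∀ n : ℕ, ∀ N a : ℤ, N.toNat ≤ n → 2 ≤ N → 1 ≤ a → a ≤ N - 1 →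
    IsCoprime a N → ∀ L L', IsW a N L → IsW (N - a) N L' →
    (L.map (fun x => x - 1)).sum = (L'.map (fun x => x - 1)).sum := by
  intro n
  induction n with
  | zero => intro N a hn hN; omega
  | succ n ih =>
    intro N a hn hN ha ha' hcop L L' hL hL'
    have key : ∀ b : ℤ, 1 ≤ b → 2*b < N → IsCoprime b N → ∀ K K', IsW b N K →
        IsW (N - b) N K' →
        (K.map (fun x => x - 1)).sum = (K'.map (fun x => x - 1)).sum := by
      intro b hb h2b hbcop K K' hK hK'
      obtain ⟨ω, α, hKeq, hα3, hKsmall, hKsum⟩ := decLast b N hb h2b K hK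
      obtain ⟨T, hK'eq, hK'small, hK'sum⟩ := appendTwo b N hb h2b K' hK'
      have hsmall : ((ω ++ [α-1]).map (fun x => x - 1)).sum
          = (T.map (fun x => x - 1)).sum := by
        have : (N - b) - b = N - 2*b := by ring
        refine ih (N - b) b (by omega) (by omega) hb (by omega) ?_ _ _ hKsmall ?_
        · have h := hbcop.add_mul_left_right (-1)
          rwa [show N + b * -1 = N - b by ring] at h
        · rw [this]; exact hK'small
      omega
    rcases lt_trichotomy (2*a) N with h | h | h
    · exact key a ha h hcop L L' hL hL'
    · have : IsUnit a := hcop.isUnit_of_dvd' dvd_rfl ⟨2, by linarith⟩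
      rw [Int.isUnit_iff] at this
      have ha1 : a = 1 := by omega
      have hN2 : N = 2 := by omega
      subst ha1; subst hN2
      have hL'1 : IsW 1 2 L' := by norm_num at hL'; exact hL'
      rw [base2 _ L hL rfl, base2 _ L' hL'1 rfl]
    · have hb : 1 ≤ N - a := by omega
      have h2b : 2*(N-a) < N := by omega
      have hbcop : IsCoprime (N - a) N := by
        have h1 := hcop.add_mul_right_left (-1)
        rwa [show a + -1 * N = -(N - a) by ring, IsCoprime.neg_left_iff] at h1
      have hL2 : IsW (N - (N - a)) N L := by
        rwa [show N - (N - a) = a by ring]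
      exact (key (N - a) hb h2b hbcop L' L hL' hL2).symm


theorem stmt18 (N a : ℤ) (hN : 2 ≤ N) (ha : 1 ≤ a) (ha' : a ≤ N - 1)
    (hcop : IsCoprime a N)
    (L L' : List ℤ) (hL : IsW a N L) (hL' : IsW (N - a) N L') :
    (L.map (fun x => x - 1)).sum = (L'.map (fun x => x - 1)).sum := by
  exact main_ind N.toNat N a le_rfl hN ha ha' hcop L L' hL hL'
end
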